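/- For every natural number N, the connected components of the space {x : Fin N → ℝ | Function.Injective x} of ordered configurations of N distinct points on the line are exactly the sets C_σ := {x : Fin N → ℝ | StrictMono (x ∘ σ)} for σ ∈ S_N; that is, each C_σ is a connected component, distinct permutations σ ≠ τ give disjoint sets C_σ ∩ C_τ = ∅ (so for N ≥ 1 there are exactly N! components), and the union of all C_σ equals the whole space of injective tuples. -/

import Mathlib

namespace Stmt4Aux

variable {N : ℕ}

def C (σ : Equiv.Perm (Fin N)) : Set (Fin N → ℝ) := {x | StrictMono (x ∘ ⇑σ)}

def S (N : ℕ) : Set (Fin N → ℝ) := {x | Function.Injective x}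

lemma C_subset_S (σ : Equiv.Perm (Fin N)) : C σ ⊆ S N := by
  intro x hx
  have hx' : Function.Injective (x ∘ ⇑σ) := hx.injective
  have : x = (x ∘ ⇑σ) ∘ ⇑σ.symm := by ext i; simp
  rw [S, Set.mem_setOf_eq, this]
  exact hx'.comp σ.symm.injective

lemma convex_C (σ : Equiv.Perm (Fin N)) : Convex ℝ (C σ) := by
  intro x hx y hy a b ha hb hab i j hij
  have h1 := hx hij
  have h2 := hy hij
  simp only [Function.comp_apply, Pi.add_apply, Pi.smul_apply, smul_eq_mul]
  rcases eq_or_lt_of_le ha with rfl | ha'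
  · have hb1 : b = 1 := by linarith
    simpa [hb1] using h2
  · have := mul_lt_mul_of_pos_left h1 ha'
    have := mul_le_mul_of_nonneg_left h2.le hb
    simp only [Function.comp_apply] at *
    linarith

lemma isOpen_C (σ : Equiv.Perm (Fin N)) : IsOpen (C σ) := by
  have hC : C σ = ⋂ (i : Fin N), ⋂ (j : Fin N),
      {x : Fin N → ℝ | i < j → x (σ i) < x (σ j)} := by
    ext x
    simp only [C, Set.mem_iInter, Set.mem_setOf_eq]
    exact ⟨fun h i j hij => h hij, fun h a b hab => h a b hab⟩
  rw [hC]
  refine isOpen_iInter_of_finite fun i => isOpen_iInter_of_finite fun j => ?_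
  by_cases h : i < j
  · have : {x : Fin N → ℝ | i < j → x (σ i) < x (σ j)}
        = {x : Fin N → ℝ | x (σ i) < x (σ j)} := by ext x; simp [h]
    rw [this]
    exact isOpen_lt (continuous_apply _) (continuous_apply _)
  · have : {x : Fin N → ℝ | i < j → x (σ i) < x (σ j)} = Set.univ := by ext x; simp [h]
    rw [this]; exact isOpen_univ

lemma exists_C {x : Fin N → ℝ} (hx : x ∈ S N) : ∃ σ, x ∈ C σ :=
  ⟨Tuple.sort x, (Tuple.monotone_sort x).strictMono_of_injective
    (hx.comp (Tuple.sort x).injective)⟩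

lemma perm_eq_of_mem {σ τ : Equiv.Perm (Fin N)} {x : Fin N → ℝ}
    (h1 : x ∈ C σ) (h2 : x ∈ C τ) : σ = τ := by
  have hxS := C_subset_S σ h1
  have hr : Set.range (x ∘ ⇑σ) = Set.range (x ∘ ⇑τ) := by
    rw [Set.range_comp, Set.range_comp, σ.range_eq_univ, τ.range_eq_univ]
  have hfun : x ∘ ⇑σ = x ∘ ⇑τ := (StrictMono.range_inj h1 h2).1 hr
  ext i
  exact Fin.val_eq_of_eq (hxS (congrFun hfun i))

lemma componentIn_eq {σ : Equiv.Perm (Fin N)} {x : Fin N → ℝ} (hx : x ∈ C σ) :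
    connectedComponentIn (S N) x = C σ := by
  apply Set.Subset.antisymm
  · set U : Set (Fin N → ℝ) := ⋃ τ ∈ {τ : Equiv.Perm (Fin N) | τ ≠ σ}, C τ with hUdef
    have hU : IsOpen U := isOpen_biUnion fun τ _ => isOpen_C τ
    have hdisj : Disjoint (C σ) U := by
      rw [Set.disjoint_left]
      rintro y hy hyU
      simp only [hUdef, Set.mem_iUnion, Set.mem_setOf_eq] at hyU
      obtain ⟨τ, hτ, hyτ⟩ := hyU
      exact hτ (perm_eq_of_mem hyτ hy)
    have hsub : connectedComponentIn (S N) x ⊆ C σ ∪ U := by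
      intro y hy
      obtain ⟨τ, hτ⟩ := exists_C (connectedComponentIn_subset (S N) x hy)
      by_cases h : τ = σ
      · left; rwa [h] at hτ
      · right; exact Set.mem_biUnion h hτ
    exact isPreconnected_connectedComponentIn.subset_left_of_subset_union
      (isOpen_C σ) hU hdisj hsub
      ⟨x, mem_connectedComponentIn (C_subset_S σ hx), hx⟩
  · exact (convex_C σ).isPreconnected.subset_connectedComponentIn hx (C_subset_S σ)

def pt (σ : Equiv.Perm (Fin N)) : Fin N → ℝ := fun i => ((σ.symm i : Fin N) : ℕ)

lemma pt_mem (σ : Equiv.Perm (Fin N)) : pt σ ∈ C σ := by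
  intro i j hij
  simp only [pt, Function.comp_apply, Equiv.symm_apply_apply]
  exact_mod_cast hij

end Stmt4Aux

open Stmt4Aux in
theorem stmt_4 (N : ℕ) :
    (∀ σ : Equiv.Perm (Fin N), ∀ x ∈ {x : Fin N → ℝ | StrictMono (x ∘ ⇑σ)},
      connectedComponentIn {x : Fin N → ℝ | Function.Injective x} x
        = {x : Fin N → ℝ | StrictMono (x ∘ ⇑σ)}) ∧
    (∀ σ τ : Equiv.Perm (Fin N), σ ≠ τ →
      {x : Fin N → ℝ | StrictMono (x ∘ ⇑σ)} ∩ {x : Fin N → ℝ | StrictMono (x ∘ ⇑τ)} = ∅) ∧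
    (1 ≤ N →
      Nat.card (ConnectedComponents {x : Fin N → ℝ // Function.Injective x}) = N.factorial) ∧
    (⋃ σ : Equiv.Perm (Fin N), {x : Fin N → ℝ | StrictMono (x ∘ ⇑σ)})
      = {x : Fin N → ℝ | Function.Injective x} := by
  refine ⟨fun σ x hx => componentIn_eq hx, ?_, ?_, ?_⟩
  · intro σ τ hne
    ext x
    simp only [Set.mem_inter_iff, Set.mem_empty_iff_false, iff_false, not_and]
    intro h1 h2
    exact hne (perm_eq_of_mem h1 h2)
  · intro _
    have hmem : ∀ σ : Equiv.Perm (Fin N), pt σ ∈ S N := fun σ => C_subset_S σ (pt_mem σ)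
    have hbij : Function.Bijective
        (fun σ : Equiv.Perm (Fin N) =>
          (ConnectedComponents.mk (⟨pt σ, hmem σ⟩ : {x : Fin N → ℝ // Function.Injective x}))) := by
      constructor
      · intro σ τ h
        rw [ConnectedComponents.coe_eq_coe] at h
        have h1 : connectedComponentIn (S N) (pt σ) = connectedComponentIn (S N) (pt τ) := by
          rw [connectedComponentIn_eq_image (hmem σ), connectedComponentIn_eq_image (hmem τ)]
          exact congrArg _ h
        rw [componentIn_eq (pt_mem σ), componentIn_eq (pt_mem τ)] at h1
        exact perm_eq_of_mem (pt_mem σ) (h1 ▸ pt_mem σ)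
      · intro c
        obtain ⟨⟨x, hx⟩, rfl⟩ := ConnectedComponents.surjective_coe c
        obtain ⟨σ, hσ⟩ := exists_C (x := x) hx
        refine ⟨σ, ?_⟩
        rw [ConnectedComponents.coe_eq_coe']
        have : pt σ ∈ connectedComponentIn (S N) x := by
          rw [componentIn_eq hσ]; exact pt_mem σ
        rw [connectedComponentIn_eq_image (C_subset_S σ hσ)] at this
        obtain ⟨y, hy, hyx⟩ := this
        have : y = ⟨pt σ, hmem σ⟩ := Subtype.ext hyx
        rwa [this] at hy
    rw [← Nat.card_congr (Equiv.ofBijective _ hbij)]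
    simp [Nat.card_eq_fintype_card, Fintype.card_perm]
  · ext x
    simp only [Set.mem_iUnion, Set.mem_setOf_eq]
    constructor
    · rintro ⟨σ, hσ⟩; exact C_subset_S σ hσ
    · intro hx; exact exists_C hx
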